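/- If f ∈ G has infinitely many nontrivial orbitals, then there exist g, g₁, g₂ ∈ G such that: g is a restriction of f and g is not the identity; g₁ is a bump which is a restriction of g and whose support equals a single nontrivial orbital of g; g₁ and g₂ have disjoint supports; g = g₁ ∘ g₂; and g₂ is conjugate to g in G. -/

import Mathlib

open FirstOrder

/-- `G` is the group of all order-automorphisms of `(ℚ, <)` under composition. -/
abbrev G : Type := ℚ ≃o ℚ

/-- The support of `f ∈ G`: the set of points moved by `f`. -/
def support (f : G) : Set ℚ := {a : ℚ | f a ≠ a}

/-- The orbital relation of `f`: `a ~_f b` iff `f^m a ≤ b ≤ f^n a` for some integers `m, n`. -/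
def orbRel (f : G) (a b : ℚ) : Prop := ∃ m n : ℤ, (f ^ m) a ≤ b ∧ b ≤ (f ^ n) a

/-- An orbital of `f` is an equivalence class of the orbital relation of `f`. -/
def IsOrbital (f : G) (X : Set ℚ) : Prop := ∃ a : ℚ, X = {b : ℚ | orbRel f a b}

/-- An orbital is nontrivial if it contains a point moved by `f`. -/
def IsNontrivialOrbital (f : G) (X : Set ℚ) : Prop :=
  IsOrbital f X ∧ ∃ a ∈ X, f a ≠ a

/-- A bump is a non-identity element of `G` with exactly one nontrivial orbital. -/
def IsBump (f : G) : Prop := f ≠ 1 ∧ ∃! X : Set ℚ, IsNontrivialOrbital f X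

/-- `g` is a restriction of `f`: the support of `g` is contained in that of `f`, and
`g` agrees with `f` on the support of `g`. -/
def IsRestriction (g f : G) : Prop :=
  support g ⊆ support f ∧ ∀ a ∈ support g, g a = f a

namespace L21

lemma mul_apply (f g : G) (a : ℚ) : (f * g) a = f (g a) := rfl
lemma one_apply (a : ℚ) : (1 : G) a = a := rfl
lemma inv_apply_apply (f : G) (a : ℚ) : f⁻¹ (f a) = a := f.symm_apply_apply a
lemma apply_inv_apply (f : G) (a : ℚ) : f (f⁻¹ a) = a := f.apply_symm_apply a

lemma zpow_add_apply (u : G) (m n : ℤ) (a : ℚ) : (u ^ (m + n)) a = (u ^ m) ((u ^ n) a) := by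
  rw [zpow_add]; rfl

lemma zpow_mono (u : G) (m : ℤ) : StrictMono ((u ^ m : G) : ℚ → ℚ) := (u ^ m).strictMono

lemma apply_zpow_comm (u : G) (k : ℤ) (a : ℚ) : u ((u ^ k) a) = (u ^ k) (u a) := by
  have h1 : (u ^ (1 + k)) a = u ((u ^ k) a) := by rw [zpow_add_apply, zpow_one]
  have h2 : (u ^ (k + 1)) a = (u ^ k) (u a) := by rw [zpow_add_apply, zpow_one]
  rw [← h1, ← h2, add_comm]

def orbSet (u : G) (a : ℚ) : Set ℚ := {b | orbRel u a b}

lemma mem_orbSet {u : G} {a b : ℚ} :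
    b ∈ orbSet u a ↔ ∃ m n : ℤ, (u ^ m) a ≤ b ∧ b ≤ (u ^ n) a := Iff.rfl

lemma orbRel_refl (u : G) (a : ℚ) : orbRel u a a :=
  ⟨0, 0, by simp, by simp⟩

lemma self_mem_orbSet (u : G) (a : ℚ) : a ∈ orbSet u a := orbRel_refl u a

lemma orbRel_symm {u : G} {a b : ℚ} (h : orbRel u a b) : orbRel u b a := by
  obtain ⟨m, n, h1, h2⟩ := h
  refine ⟨-n, -m, ?_, ?_⟩
  · have := (zpow_mono u (-n)).monotone h2
    rwa [← zpow_add_apply, neg_add_cancel, zpow_zero] at this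
  · have := (zpow_mono u (-m)).monotone h1
    rwa [← zpow_add_apply, neg_add_cancel, zpow_zero] at this

lemma orbRel_trans {u : G} {a b c : ℚ} (h : orbRel u a b) (h' : orbRel u b c) :
    orbRel u a c := by
  obtain ⟨m, n, h1, h2⟩ := h
  obtain ⟨p, q, h3, h4⟩ := h'
  refine ⟨p + m, q + n, ?_, ?_⟩
  · exact le_trans (by rw [zpow_add_apply]; exact (zpow_mono u p).monotone h1) h3
  · exact le_trans h4 (by rw [zpow_add_apply]; exact (zpow_mono u q).monotone h2)

lemma zpow_mem_orbSet (u : G) (a : ℚ) (k : ℤ) : (u ^ k) a ∈ orbSet u a :=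
  ⟨k, k, le_refl _, le_refl _⟩

lemma apply_mem_orbSet (u : G) (a : ℚ) : u a ∈ orbSet u a := by
  have := zpow_mem_orbSet u a 1
  rwa [zpow_one] at this

lemma zpow_mem_orbSet' {u : G} {a b : ℚ} (h : b ∈ orbSet u a) (k : ℤ) :
    (u ^ k) b ∈ orbSet u a := by
  obtain ⟨m, n, h1, h2⟩ := h
  exact ⟨k + m, k + n, by rw [zpow_add_apply]; exact (zpow_mono u k).monotone h1,
    by rw [zpow_add_apply]; exact (zpow_mono u k).monotone h2⟩

lemma apply_mem_orbSet' {u : G} {a b : ℚ} (h : b ∈ orbSet u a) : u b ∈ orbSet u a := by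
  have := zpow_mem_orbSet' h 1; rwa [zpow_one] at this

lemma inv_apply_mem_orbSet' {u : G} {a b : ℚ} (h : b ∈ orbSet u a) : u⁻¹ b ∈ orbSet u a := by
  have := zpow_mem_orbSet' h (-1); rwa [zpow_neg, zpow_one] at this

lemma orbSet_eq_of_mem {u : G} {a b : ℚ} (h : b ∈ orbSet u a) : orbSet u b = orbSet u a := by
  ext c
  exact ⟨fun hc => orbRel_trans h hc, fun hc => orbRel_trans (orbRel_symm h) hc⟩

lemma mem_orbSet_of_between {u : G} {a b₁ b₂ c : ℚ} (h1 : b₁ ∈ orbSet u a)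
    (h2 : b₂ ∈ orbSet u a) (hc1 : b₁ ≤ c) (hc2 : c ≤ b₂) : c ∈ orbSet u a := by
  obtain ⟨m, _, hm, _⟩ := h1
  obtain ⟨_, n, _, hn⟩ := h2
  exact ⟨m, n, le_trans hm hc1, le_trans hc2 hn⟩

lemma zpow_anchor_strictMono {u : G} {a : ℚ} (h : a < u a) :
    StrictMono (fun k : ℤ => (u ^ k) a) := by
  apply strictMono_int_of_lt_succ
  intro k
  have : (u ^ (k + 1)) a = (u ^ k) (u a) := by
    rw [zpow_add_apply, zpow_one]
  simpa [this] using (zpow_mono u k) h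

lemma orbSet_inv (u : G) (a : ℚ) : orbSet u⁻¹ a = orbSet u a := by
  ext b
  constructor
  · rintro ⟨m, n, h1, h2⟩
    rw [inv_zpow, ← zpow_neg] at h1 h2
    exact ⟨-m, -n, h1, h2⟩
  · rintro ⟨m, n, h1, h2⟩
    refine ⟨-m, -n, ?_, ?_⟩ <;> rw [inv_zpow, ← zpow_neg, neg_neg] <;> assumption

lemma exists_key {u : G} {p : ℚ} (hp : p < u p) {x : ℚ} (hx : x ∈ orbSet u p) :
    ∃ k : ℤ, (u ^ k) p ≤ x ∧ x < (u ^ (k + 1)) p := by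
  obtain ⟨m, n, h1, h2⟩ := hx
  have hsm := zpow_anchor_strictMono hp
  have hbdd : ∀ z : ℤ, z ∈ {k : ℤ | (u ^ k) p ≤ x} → z ≤ n := by
    intro z hz
    by_contra hc
    exact absurd (le_trans hz h2) (not_le.2 (hsm (not_le.1 hc)))
  obtain ⟨k, hk1, hk2⟩ := Int.exists_greatest_of_bdd ⟨n, hbdd⟩ ⟨m, h1⟩
  refine ⟨k, hk1, ?_⟩
  by_contra hc
  have := hk2 (k + 1) (not_lt.1 hc)
  omega

lemma moved_of_mem_up {u : G} {p : ℚ} (hp : p < u p) {x : ℚ} (hx : x ∈ orbSet u p) :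
    x < u x := by
  obtain ⟨k, hk1, hk2⟩ := exists_key hp hx
  calc x < (u ^ (k + 1)) p := hk2
  _ = u ((u ^ k) p) := by rw [zpow_add_apply, zpow_one, apply_zpow_comm]
  _ ≤ u x := u.strictMono.monotone hk1

lemma moved_of_mem_down {u : G} {p : ℚ} (hp : u p < p) {x : ℚ} (hx : x ∈ orbSet u p) :
    u x < x := by
  have hp' : p < u⁻¹ p := by
    have := u⁻¹.strictMono hp; rwa [inv_apply_apply] at this
  rw [← orbSet_inv] at hx
  have := moved_of_mem_up hp' hx
  have := u.strictMono this
  rwa [apply_inv_apply] at this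

lemma moved_of_mem {u : G} {p : ℚ} (hp : u p ≠ p) {x : ℚ} (hx : x ∈ orbSet u p) :
    u x ≠ x := by
  rcases lt_or_gt_of_ne hp with h | h
  · exact ne_of_lt (moved_of_mem_down h hx)
  · exact ne_of_gt (moved_of_mem_up h hx)

lemma exists_gt_of_mem {u : G} {p : ℚ} (hp : u p ≠ p) {x : ℚ} (hx : x ∈ orbSet u p) :
    ∃ y ∈ orbSet u p, x < y := by
  rcases lt_or_gt_of_ne hp with h | h
  · exact ⟨u⁻¹ x, inv_apply_mem_orbSet' hx, by
      have := moved_of_mem_down h hx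
      have := u⁻¹.strictMono this
      rwa [inv_apply_apply] at this⟩
  · exact ⟨u x, apply_mem_orbSet' hx, moved_of_mem_up h hx⟩

lemma exists_lt_of_mem {u : G} {p : ℚ} (hp : u p ≠ p) {x : ℚ} (hx : x ∈ orbSet u p) :
    ∃ y ∈ orbSet u p, y < x := by
  rcases lt_or_gt_of_ne hp with h | h
  · exact ⟨u x, apply_mem_orbSet' hx, moved_of_mem_down h hx⟩
  · exact ⟨u⁻¹ x, inv_apply_mem_orbSet' hx, by
      have := moved_of_mem_up h hx
      have := u⁻¹.strictMono this
      rwa [inv_apply_apply] at this⟩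

/-- If the anchors are inequivalent and `a < a'` then the whole orbital of `a`
lies below that of `a'`. -/
lemma orbSet_lt_orbSet {u : G} {a a' : ℚ} (hsep : ¬ orbRel u a a') (haa' : a < a') :
    ∀ x ∈ orbSet u a, ∀ y ∈ orbSet u a', x < y := by
  intro x hx y hy
  by_contra hc
  push_neg at hc
  rcases le_or_gt a y with h | h
  · have : y ∈ orbSet u a := mem_orbSet_of_between (self_mem_orbSet u a) hx h hc
    exact hsep (orbRel_trans this (orbRel_symm hy))
  · have : a ∈ orbSet u a' := mem_orbSet_of_between hy (self_mem_orbSet u a') h.le haa'.le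
    exact hsep (orbRel_symm this)

end L21

namespace L21

open scoped Classical

lemma zpow_succ_apply (u : G) (k : ℤ) (a : ℚ) : (u ^ (k + 1)) a = u ((u ^ k) a) := by
  rw [zpow_add_apply, zpow_one, apply_zpow_comm]

lemma zpow_pred_apply (u : G) (k : ℤ) (a : ℚ) : (u ^ (k - 1)) a = u⁻¹ ((u ^ k) a) := by
  have h := zpow_succ_apply u (k - 1) a
  rw [sub_add_cancel] at h
  rw [h, inv_apply_apply]

/-- `U` is saturated for `f`: it contains the full orbital of each of its points. -/
def Sat (f : G) (U : Set ℚ) : Prop := ∀ a ∈ U, orbSet f a ⊆ U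

lemma Sat.apply_mem {f : G} {U : Set ℚ} (h : Sat f U) {a : ℚ} (ha : a ∈ U) : f a ∈ U :=
  h a ha (apply_mem_orbSet f a)

lemma Sat.inv_apply_mem {f : G} {U : Set ℚ} (h : Sat f U) {a : ℚ} (ha : a ∈ U) : f⁻¹ a ∈ U :=
  h a ha (inv_apply_mem_orbSet' (self_mem_orbSet f a))

noncomputable def restrFun (f : G) (U : Set ℚ) : ℚ → ℚ := fun x => if x ∈ U then f x else x

lemma restrFun_strictMono (f : G) (U : Set ℚ) (hU : Sat f U) : StrictMono (restrFun f U) := by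
  intro x y hxy
  unfold restrFun
  by_cases hx : x ∈ U <;> by_cases hy : y ∈ U <;> simp only [hx, hy, if_true, if_false]
  · exact f.strictMono hxy
  · -- x ∈ U, y ∉ U : show f x < y
    have hfx : f x ∈ orbSet f x := apply_mem_orbSet f x
    rcases lt_or_ge (f x) y with h | h
    · exact h
    · rcases eq_or_lt_of_le h with h' | h'
      · exact absurd (hU x hx (h' ▸ hfx)) hy
      · have : y ∈ orbSet f x :=
          mem_orbSet_of_between (self_mem_orbSet f x) hfx hxy.le h'.le
        exact absurd (hU x hx this) hy
  · -- x ∉ U, y ∈ U : show x < f y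
    rcases lt_or_ge x (f y) with h | h
    · exact h
    · have : x ∈ orbSet f y :=
        mem_orbSet_of_between (apply_mem_orbSet f y) (self_mem_orbSet f y) h hxy.le
      exact absurd (hU y hy this) hx
  · exact hxy

lemma restrFun_surjective (f : G) (U : Set ℚ) (hU : Sat f U) :
    Function.Surjective (restrFun f U) := by
  intro z
  by_cases hz : z ∈ U
  · refine ⟨f⁻¹ z, ?_⟩
    have h1 : f⁻¹ z ∈ U := hU.inv_apply_mem hz
    simp only [restrFun, h1, if_true]
    exact apply_inv_apply f z
  · exact ⟨z, by simp only [restrFun, hz, if_false]⟩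

/-- The restriction of `f` to a saturated set `U`. -/
noncomputable def restr (f : G) (U : Set ℚ) (hU : Sat f U) : G :=
  StrictMono.orderIsoOfSurjective (restrFun f U) (restrFun_strictMono f U hU)
    (restrFun_surjective f U hU)

lemma restr_apply_of_mem (f : G) (U : Set ℚ) (hU : Sat f U) {x : ℚ} (hx : x ∈ U) :
    restr f U hU x = f x := by
  have h : (restr f U hU : ℚ → ℚ) = restrFun f U :=
    StrictMono.coe_orderIsoOfSurjective _ _ _
  rw [show restr f U hU x = restrFun f U x from congrFun h x]
  simp only [restrFun, hx, if_true]

lemma restr_apply_of_not_mem (f : G) (U : Set ℚ) (hU : Sat f U) {x : ℚ} (hx : x ∉ U) :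
    restr f U hU x = x := by
  have h : (restr f U hU : ℚ → ℚ) = restrFun f U :=
    StrictMono.coe_orderIsoOfSurjective _ _ _
  rw [show restr f U hU x = restrFun f U x from congrFun h x]
  simp only [restrFun, hx, if_false]

lemma restr_inv_apply_of_mem (f : G) (U : Set ℚ) (hU : Sat f U) {z : ℚ} (hz : z ∈ U) :
    (restr f U hU)⁻¹ z = f⁻¹ z := by
  have h1 : restr f U hU (f⁻¹ z) = z := by
    rw [restr_apply_of_mem f U hU (hU.inv_apply_mem hz), apply_inv_apply]
  calc (restr f U hU)⁻¹ z = (restr f U hU).symm z := rfl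
  _ = f⁻¹ z := by conv_lhs => rw [← h1, OrderIso.symm_apply_apply]

lemma restr_inv_apply_of_not_mem (f : G) (U : Set ℚ) (hU : Sat f U) {z : ℚ} (hz : z ∉ U) :
    (restr f U hU)⁻¹ z = z := by
  have h1 : restr f U hU z = z := restr_apply_of_not_mem f U hU hz
  calc (restr f U hU)⁻¹ z = (restr f U hU).symm z := rfl
  _ = z := by conv_lhs => rw [← h1, OrderIso.symm_apply_apply]

lemma restr_zpow_of_mem (f : G) (U : Set ℚ) (hU : Sat f U) (k : ℤ) {x : ℚ} (hx : x ∈ U) :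
    ((restr f U hU) ^ k) x = (f ^ k) x := by
  have mem : ∀ j : ℤ, (f ^ j) x ∈ U := fun j => hU x hx (zpow_mem_orbSet f x j)
  induction k using Int.induction_on with
  | zero => simp
  | succ k ih =>
      rw [zpow_succ_apply, zpow_succ_apply, ih, restr_apply_of_mem f U hU (mem k)]
  | pred k ih =>
      rw [show (-(k:ℤ) - 1) = (-(k:ℤ)) - 1 from rfl, zpow_pred_apply, zpow_pred_apply, ih,
        restr_inv_apply_of_mem f U hU (mem _)]

lemma restr_zpow_of_not_mem (f : G) (U : Set ℚ) (hU : Sat f U) (k : ℤ) {x : ℚ} (hx : x ∉ U) :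
    ((restr f U hU) ^ k) x = x := by
  induction k using Int.induction_on with
  | zero => simp
  | succ k ih => rw [zpow_succ_apply, ih, restr_apply_of_not_mem f U hU hx]
  | pred k ih => rw [zpow_pred_apply, ih, restr_inv_apply_of_not_mem f U hU hx]

lemma orbSet_restr_of_mem (f : G) (U : Set ℚ) (hU : Sat f U) {x : ℚ} (hx : x ∈ U) :
    orbSet (restr f U hU) x = orbSet f x := by
  ext b
  constructor
  · rintro ⟨m, n, h1, h2⟩
    rw [restr_zpow_of_mem f U hU _ hx] at h1 h2
    exact ⟨m, n, h1, h2⟩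
  · rintro ⟨m, n, h1, h2⟩
    exact ⟨m, n, by rwa [restr_zpow_of_mem f U hU _ hx],
      by rwa [restr_zpow_of_mem f U hU _ hx]⟩

lemma orbSet_restr_of_not_mem (f : G) (U : Set ℚ) (hU : Sat f U) {x : ℚ} (hx : x ∉ U) :
    orbSet (restr f U hU) x = {x} := by
  ext b
  constructor
  · rintro ⟨m, n, h1, h2⟩
    rw [restr_zpow_of_not_mem f U hU _ hx] at h1 h2
    exact le_antisymm h2 h1
  · rintro rfl
    exact self_mem_orbSet _ _

lemma support_restr (f : G) (U : Set ℚ) (hU : Sat f U) (hmoved : ∀ a ∈ U, f a ≠ a) :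
    support (restr f U hU) = U := by
  ext x
  simp only [support, Set.mem_setOf_eq]
  constructor
  · intro hx
    by_contra hc
    exact hx (restr_apply_of_not_mem f U hU hc)
  · intro hx
    rw [restr_apply_of_mem f U hU hx]
    exact hmoved x hx

end L21

namespace L21

open scoped Classical

section BlockIso

variable (u : G)

/-- The "floor index" of `x` in the orbit of the anchor `p`. -/
noncomputable def key (u : G) (p x : ℚ) : ℤ :=
  if h : ∃ k : ℤ, (u ^ k) p ≤ x ∧ x < (u ^ (k + 1)) p then h.choose else 0

lemma key_spec {u : G} {p : ℚ} (hp : p < u p) {x : ℚ} (hx : x ∈ orbSet u p) :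
    (u ^ (key u p x)) p ≤ x ∧ x < (u ^ (key u p x + 1)) p := by
  have h : ∃ k : ℤ, (u ^ k) p ≤ x ∧ x < (u ^ (k + 1)) p := exists_key hp hx
  rw [key, dif_pos h]
  exact h.choose_spec

lemma key_eq {u : G} {p : ℚ} (hp : p < u p) {x : ℚ} {k : ℤ}
    (h1 : (u ^ k) p ≤ x) (h2 : x < (u ^ (k + 1)) p) : key u p x = k := by
  have hx : x ∈ orbSet u p := ⟨k, k + 1, h1, h2.le⟩
  obtain ⟨s1, s2⟩ := key_spec hp hx
  set l := key u p x with hl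
  have hsm := zpow_anchor_strictMono hp
  have c1 : l < k + 1 := by
    by_contra hc
    exact absurd (le_trans (hsm.monotone (not_lt.1 hc)) s1) (not_le.2 h2)
  have c2 : k < l + 1 := by
    by_contra hc
    exact absurd (le_trans (hsm.monotone (not_lt.1 hc)) h1) (not_le.2 s2)
  omega

lemma zpow_cancel (u : G) (k : ℤ) (x : ℚ) : (u ^ (-k)) ((u ^ k) x) = x := by
  rw [← zpow_add_apply, neg_add_cancel, zpow_zero]; rfl

lemma zpow_cancel' (u : G) (k : ℤ) (x : ℚ) : (u ^ k) ((u ^ (-k)) x) = x := by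
  rw [← zpow_add_apply, add_neg_cancel, zpow_zero]; rfl

lemma exists_blockIso {u : G} {p q : ℚ} (hp : p < u p) (hq : q < u q) :
    ∃ φ : ℚ → ℚ, (∀ x ∈ orbSet u p, ∀ y ∈ orbSet u p, x < y → φ x < φ y) ∧
      φ '' orbSet u p = orbSet u q ∧ (∀ x ∈ orbSet u p, φ (u x) = u (φ x)) := by
  set s : ℚ := (u q - q) / (u p - p) with hs
  have hup : (0:ℚ) < u p - p := by linarith
  have huq : (0:ℚ) < u q - q := by linarith
  have hspos : 0 < s := div_pos huq hup
  set aff : ℚ → ℚ := fun d => q + s * (d - p) with haff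
  have aff_mono : StrictMono aff := fun d d' h => by
    simp only [haff]
    have : s * (d - p) < s * (d' - p) := by
      apply mul_lt_mul_of_pos_left _ hspos; linarith
    linarith
  have aff_p : aff p = q := by simp [haff]
  have aff_up : aff (u p) = u q := by
    simp only [haff, hs]
    field_simp
    ring
  set affInv : ℚ → ℚ := fun e => p + (e - q) / s with haffInv
  have aff_affInv : ∀ e, aff (affInv e) = e := by
    intro e
    simp only [haff, haffInv]
    field_simp
    ring
  -- the map
  set φ : ℚ → ℚ := fun x =>
    if x ∈ orbSet u p then (u ^ (key u p x)) (aff ((u ^ (-(key u p x))) x)) else x with hφ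
  -- basic bounds
  have hd : ∀ x ∈ orbSet u p, p ≤ (u ^ (-(key u p x))) x ∧ (u ^ (-(key u p x))) x < u p := by
    intro x hx
    obtain ⟨s1, s2⟩ := key_spec hp hx
    set k := key u p x
    constructor
    · have := (zpow_mono u (-k)).monotone s1
      rwa [zpow_cancel] at this
    · have := (zpow_mono u (-k)) s2
      rw [← zpow_add_apply] at this
      rw [show (-k + (k+1)) = (1:ℤ) by ring, zpow_one] at this
      exact this
  have haffmem : ∀ d, p ≤ d → d < u p → q ≤ aff d ∧ aff d < u q := by
    intro d h1 h2
    constructor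
    · rw [← aff_p]; exact aff_mono.monotone h1
    · rw [← aff_up]; exact aff_mono h2
  have hφmem : ∀ x ∈ orbSet u p, φ x ∈ orbSet u q := by
    intro x hx
    simp only [hφ, if_pos hx]
    obtain ⟨h1, h2⟩ := hd x hx
    obtain ⟨h3, h4⟩ := haffmem _ h1 h2
    have : aff ((u ^ (-(key u p x))) x) ∈ orbSet u q :=
      ⟨0, 1, by rw [zpow_zero]; exact h3, by rw [zpow_one]; exact h4.le⟩
    exact zpow_mem_orbSet' this _
  have hkey_le : ∀ x ∈ orbSet u p, ∀ y ∈ orbSet u p, x ≤ y → key u p x ≤ key u p y := by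
    intro x hx y hy hxy
    by_contra hc
    push_neg at hc
    have h1 : (u ^ (key u p y + 1)) p ≤ (u ^ (key u p x)) p :=
      (zpow_anchor_strictMono hp).monotone (by omega)
    have := lt_of_le_of_lt (le_trans h1 (key_spec hp hx).1) (lt_of_le_of_lt hxy (key_spec hp hy).2)
    exact lt_irrefl _ this
  refine ⟨φ, ?_, ?_, ?_⟩
  · -- strict mono on the orbital
    intro x hx y hy hxy
    have hk := hkey_le x hx y hy hxy.le
    simp only [hφ, if_pos hx, if_pos hy]
    rcases eq_or_lt_of_le hk with he | hl
    · rw [he]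
      apply zpow_mono
      apply aff_mono
      exact (zpow_mono u _) hxy
    · obtain ⟨hdx1, hdx2⟩ := hd x hx
      obtain ⟨hdy1, hdy2⟩ := hd y hy
      have b1 : (u ^ key u p x) (aff ((u ^ (-(key u p x))) x)) < (u ^ (key u p x + 1)) q := by
        rw [zpow_succ_apply, apply_zpow_comm]
        exact (zpow_mono u _) (haffmem _ hdx1 hdx2).2
      have b2 : (u ^ (key u p x + 1)) q ≤ (u ^ key u p y) q :=
        (zpow_anchor_strictMono hq).monotone (by omega)
      have b3 : (u ^ key u p y) q ≤ (u ^ key u p y) (aff ((u ^ (-(key u p y))) y)) :=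
        (zpow_mono u _).monotone (haffmem _ hdy1 hdy2).1
      exact lt_of_lt_of_le (lt_of_lt_of_le b1 b2) b3
  · -- image
    apply Set.eq_of_subset_of_subset
    · rintro _ ⟨x, hx, rfl⟩
      exact hφmem x hx
    · intro z hz
      obtain ⟨t1, t2⟩ := key_spec hq hz
      set m := key u q z with hm
      set e := (u ^ (-m)) z with he
      have he1 : q ≤ e := by
        have := (zpow_mono u (-m)).monotone t1
        rwa [zpow_cancel] at this
      have he2 : e < u q := by
        have := (zpow_mono u (-m)) t2
        rw [← zpow_add_apply, show (-m + (m+1)) = (1:ℤ) by ring, zpow_one] at this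
        exact this
      set d := affInv e with hdd
      have hd1 : p ≤ d := by
        by_contra hcon
        push_neg at hcon
        have := aff_mono hcon
        rw [aff_affInv, aff_p] at this
        exact absurd he1 (not_le.2 this)
      have hd2 : d < u p := by
        by_contra hcon
        push_neg at hcon
        have := aff_mono.monotone hcon
        rw [aff_affInv, aff_up] at this
        exact absurd he2 (not_lt.2 this)
      set x := (u ^ m) d with hx
      have hxm : x ∈ orbSet u p := by
        have : d ∈ orbSet u p := ⟨0, 1, by rw [zpow_zero]; exact hd1, by rw [zpow_one]; exact hd2.le⟩
        exact zpow_mem_orbSet' this m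
      refine ⟨x, hxm, ?_⟩
      have hkx : key u p x = m := by
        apply key_eq hp
        · exact (zpow_mono u m).monotone hd1
        · rw [zpow_succ_apply, apply_zpow_comm]
          exact (zpow_mono u m) hd2
      simp only [hφ, if_pos hxm, hkx]
      simp only [hx, zpow_cancel, hdd, aff_affInv, he, zpow_cancel']
  · -- equivariance
    intro x hx
    have hux : u x ∈ orbSet u p := apply_mem_orbSet' hx
    obtain ⟨s1, s2⟩ := key_spec hp hx
    have hkux : key u p (u x) = key u p x + 1 := by
      apply key_eq hp
      · rw [zpow_succ_apply]
        exact u.strictMono.monotone s1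
      · rw [zpow_succ_apply (u := u) (k := key u p x + 1)]
        exact u.strictMono s2
    simp only [hφ, if_pos hx, if_pos hux, hkux]
    have harg : (u ^ (-(key u p x + 1))) (u x) = (u ^ (-(key u p x))) x := by
      have : u x = (u ^ (1:ℤ)) x := by rw [zpow_one]
      rw [this, ← zpow_add_apply, show (-(key u p x + 1) + 1) = -(key u p x) by ring]
    rw [harg, zpow_succ_apply]

end BlockIso

end L21

namespace L21

open scoped Classical

section ConvexIso

def Conv (A : Set ℚ) : Prop := ∀ x ∈ A, ∀ y ∈ A, ∀ z, x ≤ z → z ≤ y → z ∈ A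

def intr (A : Set ℚ) : Set ℚ := {z | z ∈ A ∧ (∃ w ∈ A, w < z) ∧ (∃ w ∈ A, z < w)}

lemma intr_subset (A : Set ℚ) : intr A ⊆ A := fun _ h => h.1

lemma mid_mem {A : Set ℚ} (hA : Conv A) {x y : ℚ} (hx : x ∈ A) (hy : y ∈ A) (h : x < y) :
    (x + y) / 2 ∈ A ∧ x < (x + y) / 2 ∧ (x + y) / 2 < y := by
  have h1 : x < (x + y) / 2 := by linarith
  have h2 : (x + y) / 2 < y := by linarith
  exact ⟨hA x hx y hy _ h1.le h2.le, h1, h2⟩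

lemma mid_mem_intr {A : Set ℚ} (hA : Conv A) {x y : ℚ} (hx : x ∈ A) (hy : y ∈ A) (h : x < y) :
    (x + y) / 2 ∈ intr A ∧ x < (x + y) / 2 ∧ (x + y) / 2 < y := by
  obtain ⟨hm, h1, h2⟩ := mid_mem hA hx hy h
  exact ⟨⟨hm, ⟨x, hx, h1⟩, ⟨y, hy, h2⟩⟩, h1, h2⟩

lemma intr_nonempty {A : Set ℚ} (hA : Conv A) (h2A : ∃ x ∈ A, ∃ y ∈ A, x < y) :
    (intr A).Nonempty := by
  obtain ⟨x, hx, y, hy, hxy⟩ := h2A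
  exact ⟨_, (mid_mem_intr hA hx hy hxy).1⟩

lemma not_intr_cases {A : Set ℚ} {z : ℚ} (hz : z ∈ A) (h : z ∉ intr A) :
    IsLeast A z ∨ IsGreatest A z := by
  by_cases hl : ∃ w ∈ A, w < z
  · right
    refine ⟨hz, fun w hw => ?_⟩
    by_contra hc
    exact h ⟨hz, hl, ⟨w, hw, not_le.1 hc⟩⟩
  · left
    push_neg at hl
    exact ⟨hz, fun w hw => hl w hw⟩

lemma least_not_intr {A : Set ℚ} {z : ℚ} (h : IsLeast A z) : z ∉ intr A := by
  rintro ⟨_, ⟨w, hw, hwz⟩, _⟩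
  exact absurd (h.2 hw) (not_le.2 hwz)

lemma greatest_not_intr {A : Set ℚ} {z : ℚ} (h : IsGreatest A z) : z ∉ intr A := by
  rintro ⟨_, _, ⟨w, hw, hwz⟩⟩
  exact absurd (h.2 hw) (not_le.2 hwz)

lemma least_ne_greatest {A : Set ℚ} (h2A : ∃ x ∈ A, ∃ y ∈ A, x < y) {z z' : ℚ}
    (hl : IsLeast A z) (hg : IsGreatest A z') : z < z' := by
  obtain ⟨x, hx, y, hy, hxy⟩ := h2A
  exact lt_of_le_of_lt (hl.2 hx) (lt_of_lt_of_le hxy (hg.2 hy))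

lemma least_lt_intr {A : Set ℚ} {m b : ℚ} (hm : IsLeast A m) (hb : b ∈ intr A) : m < b := by
  obtain ⟨hbA, ⟨w, hw, hwb⟩, _⟩ := hb
  exact lt_of_le_of_lt (hm.2 hw) hwb

lemma intr_lt_greatest {A : Set ℚ} {m b : ℚ} (hm : IsGreatest A m) (hb : b ∈ intr A) : b < m := by
  obtain ⟨hbA, _, ⟨w, hw, hwb⟩⟩ := hb
  exact lt_of_lt_of_le hwb (hm.2 hw)

lemma exists_intr_iso {A B : Set ℚ} (hA : Conv A) (hB : Conv B)
    (h2A : ∃ x ∈ A, ∃ y ∈ A, x < y) (h2B : ∃ x ∈ B, ∃ y ∈ B, x < y) :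
    Nonempty (↥(intr A) ≃o ↥(intr B)) := by
  have inst : ∀ (C : Set ℚ), Conv C → (∃ x ∈ C, ∃ y ∈ C, x < y) →
      Nonempty ↥(intr C) ∧ DenselyOrdered ↥(intr C) ∧ NoMinOrder ↥(intr C)
        ∧ NoMaxOrder ↥(intr C) := by
    intro C hC h2C
    refine ⟨(intr_nonempty hC h2C).to_subtype, ⟨?_⟩, ⟨?_⟩, ⟨?_⟩⟩
    · rintro ⟨a, ha⟩ ⟨b, hb⟩ hab
      rw [Subtype.mk_lt_mk] at hab
      obtain ⟨hm, h1, h2⟩ := mid_mem hC ha.1 hb.1 hab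
      refine ⟨⟨(a+b)/2, hm, ⟨a, ha.1, h1⟩, ⟨b, hb.1, h2⟩⟩, ?_, ?_⟩ <;>
        exact Subtype.mk_lt_mk.2 (by assumption)
    · rintro ⟨a, ha⟩
      obtain ⟨w, hw, hwa⟩ := ha.2.1
      obtain ⟨hm, h1, h2⟩ := mid_mem hC hw ha.1 hwa
      exact ⟨⟨(w+a)/2, hm, ⟨w, hw, h1⟩, ⟨a, ha.1, h2⟩⟩, Subtype.mk_lt_mk.2 h2⟩
    · rintro ⟨a, ha⟩
      obtain ⟨w, hw, hwa⟩ := ha.2.2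
      obtain ⟨hm, h1, h2⟩ := mid_mem hC ha.1 hw hwa
      exact ⟨⟨(a+w)/2, hm, ⟨a, ha.1, h1⟩, ⟨w, hw, h2⟩⟩, Subtype.mk_lt_mk.2 h1⟩
  obtain ⟨n1, d1, m1, x1⟩ := inst A hA h2A
  obtain ⟨n2, d2, m2, x2⟩ := inst B hB h2B
  exact Order.iso_of_countable_dense ↥(intr A) ↥(intr B)

lemma exists_convex_iso {A B : Set ℚ} (hA : Conv A) (hB : Conv B)
    (h2A : ∃ x ∈ A, ∃ y ∈ A, x < y) (h2B : ∃ x ∈ B, ∃ y ∈ B, x < y)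
    (hmin : (∃ m, IsLeast A m) ↔ (∃ m, IsLeast B m))
    (hmax : (∃ m, IsGreatest A m) ↔ (∃ m, IsGreatest B m)) :
    ∃ e : ℚ → ℚ, (∀ x ∈ A, ∀ y ∈ A, x < y → e x < e y) ∧ e '' A = B := by
  obtain ⟨e'⟩ := exists_intr_iso hA hB h2A h2B
  set e : ℚ → ℚ := fun z =>
    if hz : z ∈ intr A then (e' ⟨z, hz⟩ : ℚ)
    else if hl : IsLeast A z then (hmin.mp ⟨z, hl⟩).choose
    else if hg : IsGreatest A z then (hmax.mp ⟨z, hg⟩).choose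
    else z with he
  have e_intr : ∀ {z} (hz : z ∈ intr A), e z = (e' ⟨z, hz⟩ : ℚ) := by
    intro z hz; simp only [he, dif_pos hz]
  have e_least : ∀ {z} (hz : IsLeast A z), IsLeast B (e z) := by
    intro z hz
    simp only [he, dif_neg (least_not_intr hz), dif_pos hz]
    exact (hmin.mp ⟨z, hz⟩).choose_spec
  have e_greatest : ∀ {z} (hz : IsGreatest A z), IsGreatest B (e z) := by
    intro z hz
    have h1 : ¬ IsLeast A z := by
      intro hc
      exact lt_irrefl z (least_ne_greatest h2A hc hz)
    simp only [he, dif_neg (greatest_not_intr hz), dif_neg h1, dif_pos hz]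
    exact (hmax.mp ⟨z, hz⟩).choose_spec
  have e_mem_intr : ∀ {z} (hz : z ∈ intr A), e z ∈ intr B := fun hz => by
    rw [e_intr hz]; exact (e' ⟨_, hz⟩).2
  refine ⟨e, ?_, ?_⟩
  · intro x hx y hy hxy
    by_cases hxi : x ∈ intr A <;> by_cases hyi : y ∈ intr A
    · rw [e_intr hxi, e_intr hyi]
      exact_mod_cast e'.strictMono (Subtype.mk_lt_mk.2 hxy)
    · rcases not_intr_cases hy hyi with h | h
      · exact absurd (lt_of_le_of_lt (h.2 hx) hxy) (lt_irrefl y)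
      · exact intr_lt_greatest (e_greatest h) (e_mem_intr hxi)
    · rcases not_intr_cases hx hxi with h | h
      · exact least_lt_intr (e_least h) (e_mem_intr hyi)
      · exact absurd (lt_of_lt_of_le hxy (h.2 hy)) (lt_irrefl x)
    · rcases not_intr_cases hx hxi with h | h <;> rcases not_intr_cases hy hyi with h' | h'
      · exact absurd (hxy.trans_le (h'.2 hx)) (lt_irrefl x)
      · exact least_ne_greatest h2B (e_least h) (e_greatest h')
      · exact absurd (hxy.trans_le (h.2 hy)) (lt_irrefl x)
      · exact absurd (hxy.trans_le (h.2 hy)) (lt_irrefl x)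
  · apply Set.eq_of_subset_of_subset
    · rintro _ ⟨x, hx, rfl⟩
      by_cases hxi : x ∈ intr A
      · exact intr_subset B (e_mem_intr hxi)
      · rcases not_intr_cases hx hxi with h | h
        · exact (e_least h).1
        · exact (e_greatest h).1
    · intro b hb
      by_cases hbi : b ∈ intr B
      · refine ⟨(e'.symm ⟨b, hbi⟩ : ℚ), intr_subset A (e'.symm ⟨b, hbi⟩).2, ?_⟩
        rw [e_intr (e'.symm ⟨b, hbi⟩).2]
        have : (⟨(e'.symm ⟨b, hbi⟩ : ℚ), (e'.symm ⟨b, hbi⟩).2⟩ : ↥(intr A)) = e'.symm ⟨b, hbi⟩ :=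
          Subtype.ext rfl
        rw [this, OrderIso.apply_symm_apply]
      · rcases not_intr_cases hb hbi with h | h
        · obtain ⟨m, hm⟩ := hmin.mpr ⟨b, h⟩
          exact ⟨m, hm.1, (e_least hm).unique h⟩
        · obtain ⟨m, hm⟩ := hmax.mpr ⟨b, h⟩
          exact ⟨m, hm.1, (e_greatest hm).unique h⟩

end ConvexIso

end L21

namespace L21

open scoped Classical

section Orbitals

lemma orbSet_eq_of_orbRel {f : G} {x y : ℚ} (h : orbRel f x y) : orbSet f x = orbSet f y :=
  (orbSet_eq_of_mem h).symm

lemma sat_iUnion (f : G) {ι : Type*} (c : ι → ℚ) : Sat f (⋃ i, orbSet f (c i)) := by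
  intro x hx
  obtain ⟨i, hi⟩ := Set.mem_iUnion.1 hx
  rw [orbSet_eq_of_mem hi]
  exact Set.subset_iUnion_of_subset i (le_refl _)

lemma isOrbital_iff {f : G} {X : Set ℚ} : IsOrbital f X ↔ ∃ a, X = orbSet f a := Iff.rfl

lemma nontrivialOrbital_restr_iff {f : G} {ι : Type*} (c : ι → ℚ)
    (hmoved : ∀ i, f (c i) ≠ c i) (X : Set ℚ) :
    IsNontrivialOrbital (restr f (⋃ i, orbSet f (c i)) (sat_iUnion f c)) X ↔
      ∃ i, X = orbSet f (c i) := by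
  set U := ⋃ i, orbSet f (c i) with hUdef
  set hU := sat_iUnion f c
  have hmv : ∀ x ∈ U, f x ≠ x := by
    intro x hx
    obtain ⟨i, hi⟩ := Set.mem_iUnion.1 hx
    exact moved_of_mem (hmoved i) hi
  constructor
  · rintro ⟨⟨a₀, hX⟩, y, hyX, hy⟩
    have hX' : X = orbSet (restr f U hU) a₀ := hX
    by_cases ha₀ : a₀ ∈ U
    · obtain ⟨i, hi⟩ := Set.mem_iUnion.1 ha₀
      refine ⟨i, ?_⟩
      rw [hX', orbSet_restr_of_mem f U hU ha₀, orbSet_eq_of_mem hi]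
    · rw [hX', orbSet_restr_of_not_mem f U hU ha₀] at hyX
      rw [Set.mem_singleton_iff] at hyX
      subst hyX
      exact absurd (restr_apply_of_not_mem f U hU ha₀) hy
  · rintro ⟨i, rfl⟩
    have hci : c i ∈ U := Set.mem_iUnion.2 ⟨i, self_mem_orbSet f (c i)⟩
    refine ⟨⟨c i, (orbSet_restr_of_mem f U hU hci).symm⟩, c i, self_mem_orbSet f (c i), ?_⟩
    rw [restr_apply_of_mem f U hU hci]
    exact hmoved i

end Orbitals

section Gaps

/-- The gap above `C` and below `D` has a least element iff `C` has a rational lub. -/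
lemma gap_least_iff {C D : Set ℚ} (hCD : ∀ x ∈ C, ∀ y ∈ D, x < y)
    (hCnomax : ∀ x ∈ C, ∃ y ∈ C, x < y) (hDnomin : ∀ x ∈ D, ∃ y ∈ D, y < x) :
    (∃ m, IsLeast {z | (∀ y ∈ C, y < z) ∧ (∀ y ∈ D, z < y)} m) ↔ (∃ q, IsLUB C q) := by
  constructor
  · rintro ⟨m, ⟨hm1, hm2⟩, hmle⟩
    refine ⟨m, fun y hy => (hm1 y hy).le, ?_⟩
    intro u hu
    by_contra hc
    push_neg at hc
    have hu1 : ∀ y ∈ C, y < u := by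
      intro y hy
      rcases eq_or_lt_of_le (hu hy) with h | h
      · obtain ⟨y', hy', hyy'⟩ := hCnomax y hy
        exact absurd (hu hy') (not_le.2 (h ▸ hyy'))
      · exact h
    have hu2 : ∀ y ∈ D, u < y := fun y hy => lt_trans hc (hm2 y hy)
    exact absurd (hmle ⟨hu1, hu2⟩) (not_le.2 hc)
  · rintro ⟨q, hq⟩
    have hq1 : ∀ y ∈ C, y < q := by
      intro y hy
      rcases eq_or_lt_of_le (hq.1 hy) with h | h
      · obtain ⟨y', hy', hyy'⟩ := hCnomax y hy
        exact absurd (hq.1 hy') (not_le.2 (h ▸ hyy'))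
      · exact h
    have hq2 : ∀ y ∈ D, q < y := by
      intro y hy
      have hyub : y ∈ upperBounds C := fun z hz => (hCD z hz y hy).le
      rcases eq_or_lt_of_le (hq.2 hyub) with h | h
      · obtain ⟨y', hy', hyy'⟩ := hDnomin y hy
        have : y' ∈ upperBounds C := fun z hz => (hCD z hz y' hy').le
        exact absurd (hq.2 this) (not_le.2 (h ▸ hyy'))
      · exact h
    exact ⟨q, ⟨hq1, hq2⟩, fun z hz => hq.2 fun y hy => (hz.1 y hy).le⟩

lemma gap_greatest_iff {C D : Set ℚ} (hCD : ∀ x ∈ C, ∀ y ∈ D, x < y)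
    (hCnomax : ∀ x ∈ C, ∃ y ∈ C, x < y) (hDnomin : ∀ x ∈ D, ∃ y ∈ D, y < x) :
    (∃ m, IsGreatest {z | (∀ y ∈ C, y < z) ∧ (∀ y ∈ D, z < y)} m) ↔ (∃ q, IsGLB D q) := by
  constructor
  · rintro ⟨m, ⟨hm1, hm2⟩, hmle⟩
    refine ⟨m, fun y hy => (hm2 y hy).le, ?_⟩
    intro u hu
    by_contra hc
    push_neg at hc
    have hu2 : ∀ y ∈ D, u < y := by
      intro y hy
      rcases eq_or_lt_of_le (hu hy) with h | h
      · obtain ⟨y', hy', hyy'⟩ := hDnomin y hy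
        exact absurd (hu hy') (not_le.2 (h.symm ▸ hyy'))
      · exact h
    have hu1 : ∀ y ∈ C, y < u := fun y hy => lt_trans (hm1 y hy) hc
    exact absurd (hmle ⟨hu1, hu2⟩) (not_le.2 hc)
  · rintro ⟨q, hq⟩
    have hq2 : ∀ y ∈ D, q < y := by
      intro y hy
      rcases eq_or_lt_of_le (hq.1 hy) with h | h
      · obtain ⟨y', hy', hyy'⟩ := hDnomin y hy
        exact absurd (hq.1 hy') (not_le.2 (h ▸ hyy'))
      · exact h
    have hq1 : ∀ y ∈ C, y < q := by
      intro y hy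
      have hylb : y ∈ lowerBounds D := fun z hz => (hCD y hy z hz).le
      rcases eq_or_lt_of_le (hq.2 hylb) with h | h
      · obtain ⟨y', hy', hyy'⟩ := hCnomax y hy
        have : y' ∈ lowerBounds D := fun z hz => (hCD y' hy' z hz).le
        exact absurd (hq.2 this) (not_le.2 (h ▸ hyy'))
      · exact h
    exact ⟨q, ⟨hq1, hq2⟩, fun z hz => hq.2 fun y hy => (hz.2 y hy).le⟩

lemma low_greatest_iff {D : Set ℚ} (hDnomin : ∀ x ∈ D, ∃ y ∈ D, y < x) :
    (∃ m, IsGreatest {z | ∀ y ∈ D, z < y} m) ↔ (∃ q, IsGLB D q) := by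
  constructor
  · rintro ⟨m, hm1, hmle⟩
    refine ⟨m, fun y hy => (hm1 y hy).le, ?_⟩
    intro u hu
    by_contra hc
    push_neg at hc
    have hu2 : ∀ y ∈ D, u < y := by
      intro y hy
      rcases eq_or_lt_of_le (hu hy) with h | h
      · obtain ⟨y', hy', hyy'⟩ := hDnomin y hy
        exact absurd (hu hy') (not_le.2 (h.symm ▸ hyy'))
      · exact h
    exact absurd (hmle hu2) (not_le.2 hc)
  · rintro ⟨q, hq⟩
    have hq2 : ∀ y ∈ D, q < y := by
      intro y hy
      rcases eq_or_lt_of_le (hq.1 hy) with h | h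
      · obtain ⟨y', hy', hyy'⟩ := hDnomin y hy
        exact absurd (hq.1 hy') (not_le.2 (h ▸ hyy'))
      · exact h
    exact ⟨q, hq2, fun z hz => hq.2 fun y hy => (hz y hy).le⟩

end Gaps

section Pigeonhole

lemma infinite_split {s : Set ℕ} (hs : s.Infinite) (P : ℕ → Prop) :
    ∃ t : Set ℕ, t ⊆ s ∧ t.Infinite ∧ ((∀ i ∈ t, P i) ∨ (∀ i ∈ t, ¬ P i)) := by
  by_cases h : (s ∩ {i | P i}).Infinite
  · exact ⟨_, Set.inter_subset_left, h, Or.inl fun i hi => hi.2⟩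
  · refine ⟨s ∩ {i | ¬ P i}, Set.inter_subset_left, ?_, Or.inr fun i hi => hi.2⟩
    rw [Set.not_infinite] at h
    by_contra h2
    rw [Set.not_infinite] at h2
    have hsub : s ⊆ (s ∩ {i | P i}) ∪ (s ∩ {i | ¬ P i}) := by
      intro i hi
      by_cases hp : P i
      · exact Or.inl ⟨hi, hp⟩
      · exact Or.inr ⟨hi, hp⟩
    exact hs (Set.Finite.subset (h.union h2) hsub)

end Pigeonhole

section Rho

/-- Conjugation of `G` by the order-reversing map `x ↦ -x`. -/
def rho (f : G) : G where
  toFun x := -(f (-x))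
  invFun x := -(f.symm (-x))
  left_inv x := by simp
  right_inv x := by simp
  map_rel_iff' := by
    intro a b
    simp only [Equiv.coe_fn_mk, neg_le_neg_iff]
    exact ⟨fun h => by simpa using f.le_iff_le.1 h, fun h => f.le_iff_le.2 (by simpa using h)⟩

lemma rho_apply (f : G) (x : ℚ) : rho f x = -(f (-x)) := rfl

lemma rho_symm_apply (f : G) (x : ℚ) : (rho f).symm x = -(f.symm (-x)) := rfl

lemma rho_mul (f g : G) : rho (f * g) = rho f * rho g := by
  ext x
  simp [rho_apply, mul_apply]

lemma rho_one : rho (1 : G) = 1 := by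
  ext x
  simp [rho_apply, one_apply]

/-- `rho` as a monoid hom. -/
def rhoHom : G →* G := ⟨⟨rho, rho_one⟩, rho_mul⟩

lemma rho_zpow (f : G) (m : ℤ) : (rho f) ^ m = rho (f ^ m) := (map_zpow rhoHom f m).symm

lemma rho_rho (f : G) : rho (rho f) = f := by
  ext x
  simp [rho_apply]

lemma orbRel_rho {f : G} {a b : ℚ} : orbRel (rho f) (-a) (-b) ↔ orbRel f a b := by
  constructor
  · rintro ⟨m, n, h1, h2⟩
    rw [rho_zpow] at h1 h2
    rw [rho_apply] at h1 h2
    simp only [neg_neg, neg_le_neg_iff] at h1 h2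
    exact ⟨n, m, h2, h1⟩
  · rintro ⟨m, n, h1, h2⟩
    refine ⟨n, m, ?_, ?_⟩ <;> rw [rho_zpow, rho_apply] <;> simp only [neg_neg, neg_le_neg_iff]
    · exact h2
    · exact h1

lemma orbSet_rho (f : G) (a : ℚ) : orbSet (rho f) a = {x | -x ∈ orbSet f (-a)} := by
  ext b
  constructor
  · rintro ⟨m, n, h1, h2⟩
    rw [rho_zpow, rho_apply] at h1 h2
    exact ⟨n, m, by linarith, by linarith⟩
  · rintro ⟨m, n, h1, h2⟩
    refine ⟨n, m, ?_, ?_⟩ <;> rw [rho_zpow, rho_apply] <;> linarith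

lemma support_rho (f : G) (x : ℚ) : x ∈ support (rho f) ↔ -x ∈ support f := by
  simp only [support, Set.mem_setOf_eq, rho_apply]
  constructor
  · intro h hc
    exact h (by rw [hc, neg_neg])
  · intro h hc
    apply h
    have : f (-x) = - x := by linarith [neg_eq_iff_eq_neg.2 hc.symm]
    exact this

lemma isNontrivialOrbital_rho {f : G} {X : Set ℚ} :
    IsNontrivialOrbital (rho f) X ↔ IsNontrivialOrbital f (Neg.neg ⁻¹' X) := by
  constructor
  · rintro ⟨⟨a₀, hX⟩, y, hyX, hy⟩
    have hXo : X = orbSet (rho f) a₀ := hX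
    refine ⟨⟨-a₀, ?_⟩, -y, ?_, ?_⟩
    · ext z
      show -z ∈ X ↔ orbRel f (-a₀) z
      rw [hXo, orbSet_rho]
      show - -z ∈ orbSet f (-a₀) ↔ _
      rw [neg_neg]
      rfl
    · show - -y ∈ X
      rwa [neg_neg]
    · intro hc
      apply hy
      rw [rho_apply, hc]
      exact neg_neg y
  · rintro ⟨⟨a₀, hX⟩, y, hyX, hy⟩
    have hXo : Neg.neg ⁻¹' X = orbSet f a₀ := hX
    refine ⟨⟨-a₀, ?_⟩, -y, ?_, ?_⟩
    · ext z
      show z ∈ X ↔ orbRel (rho f) (-a₀) z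
      have h1 : z ∈ X ↔ -z ∈ Neg.neg ⁻¹' X := by simp
      rw [h1, hXo]
      show -z ∈ orbSet f a₀ ↔ z ∈ orbSet (rho f) (-a₀)
      rw [orbSet_rho, neg_neg]
      rfl
    · exact hyX
    · intro hc
      apply hy
      rw [rho_apply] at hc
      have : f (-(-y)) = -(-y) := by linarith
      rwa [neg_neg] at this

end Rho

end L21

namespace L21

open scoped Classical

lemma main_aux (f : G) (m : ℕ → ℚ) (hmv : ∀ i, f (m i) ≠ m i) (hmono : StrictMono m)
    (hsep : ∀ i j, i ≠ j → ¬ orbRel f (m i) (m j)) :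
    ∃ g g₁ g₂ : G,
      IsRestriction g f ∧ g ≠ 1 ∧
      IsBump g₁ ∧ IsRestriction g₁ g ∧
      (∃ X : Set ℚ, IsNontrivialOrbital g X ∧ support g₁ = X) ∧
      support g₁ ∩ support g₂ = ∅ ∧
      (∀ a : ℚ, g a = g₁ (g₂ a)) ∧
      (∃ h : G, ∀ a : ℚ, g₂ a = h (g (h.symm a))) := by
  classical
  -- Step 1: pigeonhole to get constant direction / lub / glb flags
  obtain ⟨t1, ht10, ht1inf, hdir1⟩ :=
    infinite_split (Set.infinite_univ (α := ℕ)) (fun i => m i < f (m i))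
  obtain ⟨t2, ht21, ht2inf, hlub1⟩ :=
    infinite_split ht1inf (fun i => ∃ q, IsLUB (orbSet f (m i)) q)
  obtain ⟨t3, ht32, ht3inf, hglb1⟩ :=
    infinite_split ht2inf (fun i => ∃ q, IsGLB (orbSet f (m i)) q)
  haveI : Infinite ↥t3 := ht3inf.to_subtype
  set e : ℕ ↪o ℕ := Nat.orderEmbeddingOfSet t3 with he_def
  have he : ∀ n, (e n) ∈ t3 := by
    intro n
    have : e n ∈ Set.range e := Set.mem_range_self n
    rwa [Nat.orderEmbeddingOfSet_range t3] at this
  set mm : ℕ → ℚ := fun i => m (e i) with hmm_def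
  have hmm_mono : StrictMono mm := fun i j hij => hmono (e.strictMono hij)
  have hmm_mv : ∀ i, f (mm i) ≠ mm i := fun i => hmv (e i)
  have hmm_sep : ∀ i j, i ≠ j → ¬ orbRel f (mm i) (mm j) := by
    intro i j hij
    exact hsep (e i) (e j) (fun hc => hij (e.injective hc))
  have hdir : (∀ i, mm i < f (mm i)) ∨ (∀ i, f (mm i) < mm i) := by
    rcases hdir1 with h | h
    · exact Or.inl fun i => h (e i) (ht21 (ht32 (he i)))
    · refine Or.inr fun i => ?_
      have := h (e i) (ht21 (ht32 (he i)))
      rcases lt_or_gt_of_ne (hmm_mv i) with h' | h'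
      · exact h'
      · exact absurd h' this
  have hLUB : ∀ i j, (∃ q, IsLUB (orbSet f (mm i)) q) ↔ (∃ q, IsLUB (orbSet f (mm j)) q) := by
    intro i j
    rcases hlub1 with h | h
    · exact iff_of_true (h (e i) (ht32 (he i))) (h (e j) (ht32 (he j)))
    · exact iff_of_false (h (e i) (ht32 (he i))) (h (e j) (ht32 (he j)))
  have hGLB : ∀ i j, (∃ q, IsGLB (orbSet f (mm i)) q) ↔ (∃ q, IsGLB (orbSet f (mm j)) q) := by
    intro i j
    rcases hglb1 with h | h
    · exact iff_of_true (h (e i) (he i)) (h (e j) (he j))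
    · exact iff_of_false (h (e i) (he i)) (h (e j) (he j))
  -- Step 2: the blocks
  set a : ℕ → ℚ := fun i => mm (2*i+2) with ha_def
  set c : ℕ → ℚ := fun i => mm (2*i+3) with hc_def
  set ℓ : ℚ := mm 0 with hl_def
  set B : ℕ → Set ℚ := fun i => orbSet f (a i) with hB_def
  have ha_mv : ∀ i, f (a i) ≠ a i := fun i => hmm_mv _
  have hc_mv : ∀ i, f (c i) ≠ c i := fun i => hmm_mv _
  have ha_mono : StrictMono a := fun i j hij => hmm_mono (by omega)
  have ha_sep : ∀ i j, i ≠ j → ¬ orbRel f (a i) (a j) := fun i j hij =>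
    hmm_sep _ _ (by omega)
  have hac_sep : ∀ i j, ¬ orbRel f (a i) (c j) := fun i j => hmm_sep _ _ (by omega)
  have hBmoved : ∀ i, ∀ x ∈ B i, f x ≠ x := fun i x hx => moved_of_mem (ha_mv i) hx
  have hBne : ∀ i, a i ∈ B i := fun i => self_mem_orbSet f (a i)
  have Blt : ∀ i j, i < j → ∀ x ∈ B i, ∀ y ∈ B j, x < y := by
    intro i j hij
    exact orbSet_lt_orbSet (ha_sep i j (by omega)) (ha_mono hij)
  have hBuniq : ∀ {x i j}, x ∈ B i → x ∈ B j → i = j := by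
    intro x i j hi hj
    by_contra hij
    rcases Nat.lt_or_ge i j with h | h
    · exact lt_irrefl x (Blt i j h x hi x hj)
    · exact lt_irrefl x (Blt j i (by omega) x hj x hi)
  have hBnomax : ∀ i, ∀ x ∈ B i, ∃ y ∈ B i, x < y := fun i x hx =>
    exists_gt_of_mem (ha_mv i) hx
  have hBnomin : ∀ i, ∀ x ∈ B i, ∃ y ∈ B i, y < x := fun i x hx =>
    exists_lt_of_mem (ha_mv i) hx
  have hSF : ∀ i j, (∃ q, IsLUB (B i) q) ↔ (∃ q, IsLUB (B j) q) := fun i j => hLUB _ _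
  have hTF : ∀ i j, (∃ q, IsGLB (B i) q) ↔ (∃ q, IsGLB (B j) q) := fun i j => hGLB _ _
  -- gap membership of the skipped orbitals
  have hcg : ∀ i, ∀ x ∈ orbSet f (c i), (∀ y ∈ B i, y < x) ∧ (∀ y ∈ B (i+1), x < y) := by
    intro i x hx
    constructor
    · intro y hy
      refine orbSet_lt_orbSet (hac_sep i i) ?_ y hy x hx
      exact hmm_mono (by omega)
    · intro y hy
      refine orbSet_lt_orbSet ?_ ?_ x hx y hy
      · intro hc'
        exact hac_sep (i+1) i (orbRel_symm hc')
      · exact hmm_mono (by omega)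
  -- the pieces
  set L : Set ℚ := {z | ∀ y ∈ B 0, z < y} with hL_def
  set L' : Set ℚ := {z | ∀ y ∈ B 1, z < y} with hL'_def
  set Gp : ℕ → Set ℚ := fun i => {z | (∀ y ∈ B i, y < z) ∧ (∀ y ∈ B (i+1), z < y)} with hGp_def
  set T : Set ℚ := {z | ∀ i, ∀ y ∈ B i, y < z} with hT_def
  have hlL : ℓ ∈ L := by
    intro y hy
    refine orbSet_lt_orbSet (hmm_sep 0 2 (by omega)) (hmm_mono (by omega)) ℓ
      (self_mem_orbSet f ℓ) y hy
  have hlL' : ℓ ∈ L' := by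
    intro y hy
    refine orbSet_lt_orbSet (hmm_sep 0 4 (by omega)) (hmm_mono (by omega)) ℓ
      (self_mem_orbSet f ℓ) y hy
  have hLdc : ∀ {z z'}, z ∈ L → z' ≤ z → z' ∈ L := fun hz hz' y hy =>
    lt_of_le_of_lt hz' (hz y hy)
  have hL'dc : ∀ {z z'}, z ∈ L' → z' ≤ z → z' ∈ L' := fun hz hz' y hy =>
    lt_of_le_of_lt hz' (hz y hy)
  -- elementwise comparisons
  have hLB : ∀ i, ∀ x ∈ L, ∀ y ∈ B i, x < y := by
    intro i x hx y hy
    rcases Nat.eq_zero_or_pos i with rfl | hi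
    · exact hx y hy
    · exact lt_trans (hx (a 0) (hBne 0)) (Blt 0 i hi _ (hBne 0) y hy)
  have hL'B : ∀ i, 1 ≤ i → ∀ x ∈ L', ∀ y ∈ B i, x < y := by
    intro i hi x hx y hy
    rcases Nat.lt_or_ge 1 i with h | h
    · exact lt_trans (hx (a 1) (hBne 1)) (Blt 1 i h _ (hBne 1) y hy)
    · have : i = 1 := by omega
      subst this
      exact hx y hy
  have hLGp : ∀ i, ∀ x ∈ L, ∀ y ∈ Gp i, x < y := by
    intro i x hx y hy
    exact lt_trans (hLB i x hx (a i) (hBne i)) (hy.1 (a i) (hBne i))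
  have hLT : ∀ x ∈ L, ∀ y ∈ T, x < y := by
    intro x hx y hy
    exact lt_trans (hLB 0 x hx (a 0) (hBne 0)) (hy 0 (a 0) (hBne 0))
  have hL'Gp : ∀ i, 1 ≤ i → ∀ x ∈ L', ∀ y ∈ Gp i, x < y := by
    intro i hi x hx y hy
    exact lt_trans (hL'B i hi x hx (a i) (hBne i)) (hy.1 (a i) (hBne i))
  have hL'T : ∀ x ∈ L', ∀ y ∈ T, x < y := by
    intro x hx y hy
    exact lt_trans (hL'B 1 le_rfl x hx (a 1) (hBne 1)) (hy 1 (a 1) (hBne 1))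
  have hBGp : ∀ i j, i ≤ j → ∀ x ∈ B i, ∀ y ∈ Gp j, x < y := by
    intro i j hij x hx y hy
    rcases eq_or_lt_of_le hij with rfl | h
    · exact hy.1 x hx
    · exact lt_trans (Blt i j h x hx (a j) (hBne j)) (hy.1 (a j) (hBne j))
  have hGpB : ∀ i j, i < j → ∀ x ∈ Gp i, ∀ y ∈ B j, x < y := by
    intro i j hij x hx y hy
    rcases Nat.lt_or_ge (i+1) j with h | h
    · exact lt_trans (hx.2 (a (i+1)) (hBne (i+1))) (Blt (i+1) j h _ (hBne (i+1)) y hy)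
    · have : j = i + 1 := by omega
      subst this
      exact hx.2 y hy
  have hBT : ∀ i, ∀ x ∈ B i, ∀ y ∈ T, x < y := fun i x hx y hy => hy i x hx
  have hGpT : ∀ i, ∀ x ∈ Gp i, ∀ y ∈ T, x < y := by
    intro i x hx y hy
    exact lt_trans (hx.2 (a (i+1)) (hBne (i+1))) (hy (i+1) (a (i+1)) (hBne (i+1)))
  have hGpGp : ∀ i j, i < j → ∀ x ∈ Gp i, ∀ y ∈ Gp j, x < y := by
    intro i j hij x hx y hy
    have h1 : x < a (i+1) := hx.2 (a (i+1)) (hBne (i+1))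
    have h2 : a j < y := hy.1 (a j) (hBne j)
    have h3 : a (i+1) ≤ a j := ha_mono.monotone (by omega)
    linarith
  have hGpuniq : ∀ {x i j}, x ∈ Gp i → x ∈ Gp j → i = j := by
    intro x i j hi hj
    by_contra hij
    rcases Nat.lt_or_ge i j with h | h
    · exact lt_irrefl x (hGpGp i j h x hi x hj)
    · exact lt_irrefl x (hGpGp j i (by omega) x hj x hi)
  -- trichotomy and partition
  have htri : ∀ x, ∀ i, x ∈ B i ∨ (∀ y ∈ B i, y < x) ∨ (∀ y ∈ B i, x < y) := by
    intro x i
    by_cases hx : x ∈ B i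
    · exact Or.inl hx
    by_cases hex : ∃ y ∈ B i, y < x
    · refine Or.inr (Or.inl ?_)
      obtain ⟨y0, hy0, hy0x⟩ := hex
      intro y hy
      by_contra hc
      exact hx (mem_orbSet_of_between hy0 hy hy0x.le (not_lt.1 hc))
    · push_neg at hex
      refine Or.inr (Or.inr ?_)
      intro y hy
      rcases eq_or_lt_of_le (hex y hy) with h | h
      · exact absurd (h ▸ hy) hx
      · exact h
  have hpart : ∀ x, x ∈ L ∨ (∃ i, x ∈ B i) ∨ (∃ i, x ∈ Gp i) ∨ x ∈ T := by
    intro x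
    by_cases hB' : ∃ i, x ∈ B i
    · exact Or.inr (Or.inl hB')
    push_neg at hB'
    have habv : ∀ i, (∀ y ∈ B i, y < x) ∨ (∀ y ∈ B i, x < y) := by
      intro i
      rcases htri x i with h | h | h
      · exact absurd h (hB' i)
      · exact Or.inl h
      · exact Or.inr h
    by_cases hT' : ∀ i, ∀ y ∈ B i, y < x
    · exact Or.inr (Or.inr (Or.inr hT'))
    push_neg at hT'
    have hfind : ∃ i, ¬ (∀ y ∈ B i, y < x) := by
      obtain ⟨i, y, hy, hyx⟩ := hT'
      exact ⟨i, fun hc => absurd (hc y hy) (not_lt.2 hyx)⟩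
    set k := Nat.find hfind with hk_def
    have hknot : ¬ (∀ y ∈ B k, y < x) := Nat.find_spec hfind
    have hkbelow : ∀ y ∈ B k, x < y := by
      rcases habv k with h | h
      · exact absurd h hknot
      · exact h
    rcases Nat.eq_zero_or_pos k with hk0 | hkpos
    · left
      intro y hy
      exact hkbelow y (by rw [hk0]; exact hy)
    · right; right; left
      refine ⟨k - 1, ?_, ?_⟩
      · have hlt : k - 1 < k := by omega
        have hmin := Nat.find_min hfind hlt
        push_neg at hmin
        exact hmin
      · have : k - 1 + 1 = k := by omega
        rw [this]
        exact hkbelow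
  -- block isomorphisms
  have hblock : ∀ i : ℕ, ∃ φ : ℚ → ℚ, (∀ x ∈ B i, ∀ y ∈ B i, x < y → φ x < φ y) ∧
      φ '' B i = B (i+1) ∧ (∀ x ∈ B i, φ (f x) = f (φ x)) := by
    intro i
    rcases hdir with hd | hd
    · have hp : a i < f (a i) := hd _
      have hq : a (i+1) < f (a (i+1)) := hd _
      obtain ⟨φ, h1, h2, h3⟩ := exists_blockIso (u := f) hp hq
      exact ⟨φ, h1, h2, h3⟩
    · have hp : a i < f⁻¹ (a i) := by
        have := f⁻¹.strictMono (hd (2*i+2))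
        rwa [inv_apply_apply] at this
      have hq : a (i+1) < f⁻¹ (a (i+1)) := by
        have := f⁻¹.strictMono (hd (2*(i+1)+2))
        rwa [inv_apply_apply] at this
      obtain ⟨φ, h1, h2, h3⟩ := exists_blockIso (u := f⁻¹) hp hq
      simp only [orbSet_inv] at h1 h2 h3
      refine ⟨φ, h1, h2, fun x hx => ?_⟩
      have hfx : f x ∈ B i := apply_mem_orbSet' hx
      have h4 := h3 (f x) hfx
      rw [inv_apply_apply] at h4
      have h5 := congrArg f h4
      rw [apply_inv_apply] at h5
      exact h5.symm
  choose φseq hφmono hφim hφeq using hblock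
  have HBmemφ : ∀ i, ∀ x ∈ B i, φseq i x ∈ B (i+1) := by
    intro i x hx
    rw [← hφim i]
    exact ⟨x, hx, rfl⟩
  -- gap isomorphisms
  have hGpconv : ∀ i, Conv (Gp i) := by
    intro i x hx y hy z h1 h2
    exact ⟨fun w hw => lt_of_lt_of_le (hx.1 w hw) h1, fun w hw => lt_of_le_of_lt h2 (hy.2 w hw)⟩
  have hGp2 : ∀ i, ∃ x ∈ Gp i, ∃ y ∈ Gp i, x < y := by
    intro i
    have hc1 : c i ∈ Gp i := hcg i (c i) (self_mem_orbSet f (c i))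
    obtain ⟨y, hy, hcy⟩ := exists_gt_of_mem (hc_mv i) (self_mem_orbSet f (c i))
    exact ⟨c i, hc1, y, hcg i y hy, hcy⟩
  have hgap : ∀ i : ℕ, ∃ γ : ℚ → ℚ, (∀ x ∈ Gp i, ∀ y ∈ Gp i, x < y → γ x < γ y) ∧
      γ '' Gp i = Gp (i+1) := by
    intro i
    refine exists_convex_iso (hGpconv i) (hGpconv (i+1)) (hGp2 i) (hGp2 (i+1)) ?_ ?_
    · rw [gap_least_iff (Blt i (i+1) (by omega)) (hBnomax i) (hBnomin (i+1)),
        gap_least_iff (Blt (i+1) (i+2) (by omega)) (hBnomax (i+1)) (hBnomin (i+2))]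
      exact hSF i (i+1)
    · rw [gap_greatest_iff (Blt i (i+1) (by omega)) (hBnomax i) (hBnomin (i+1)),
        gap_greatest_iff (Blt (i+1) (i+2) (by omega)) (hBnomax (i+1)) (hBnomin (i+2))]
      exact hTF (i+1) (i+2)
  choose γseq hγmono hγim using hgap
  have HGpmemγ : ∀ i, ∀ x ∈ Gp i, γseq i x ∈ Gp (i+1) := by
    intro i x hx
    rw [← hγim i]
    exact ⟨x, hx, rfl⟩
  -- lower-ray isomorphism
  have hLconv : Conv L := fun x hx y hy z h1 h2 w hw => lt_of_le_of_lt h2 (hy w hw)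
  have hL'conv : Conv L' := fun x hx y hy z h1 h2 w hw => lt_of_le_of_lt h2 (hy w hw)
  have hL2 : ∃ x ∈ L, ∃ y ∈ L, x < y :=
    ⟨ℓ - 1, hLdc hlL (by linarith), ℓ, hlL, by linarith⟩
  have hL'2 : ∃ x ∈ L', ∃ y ∈ L', x < y :=
    ⟨ℓ - 1, hL'dc hlL' (by linarith), ℓ, hlL', by linarith⟩
  have hnoleast : ∀ (S : Set ℚ), (∀ {z z' : ℚ}, z ∈ S → z' ≤ z → z' ∈ S) →
      ¬ (∃ q, IsLeast S q) := by
    rintro S hdc ⟨q, hq1, hq2⟩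
    have : q - 1 ∈ S := hdc hq1 (by linarith)
    linarith [hq2 this]
  have hlow : ∃ lam : ℚ → ℚ, (∀ x ∈ L, ∀ y ∈ L, x < y → lam x < lam y) ∧ lam '' L = L' := by
    refine exists_convex_iso hLconv hL'conv hL2 hL'2 ?_ ?_
    · exact iff_of_false (hnoleast L fun h h' => hLdc h h') (hnoleast L' fun h h' => hL'dc h h')
    · rw [show L = {z | ∀ y ∈ B 0, z < y} from rfl, show L' = {z | ∀ y ∈ B 1, z < y} from rfl,
        low_greatest_iff (hBnomin 0), low_greatest_iff (hBnomin 1)]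
      exact hTF 0 1
  obtain ⟨lam, hlammono, hlamim⟩ := hlow
  have HLmemlam : ∀ x ∈ L, lam x ∈ L' := by
    intro x hx
    rw [← hlamim]
    exact ⟨x, hx, rfl⟩

  -- the global conjugating map
  set H : ℚ → ℚ := fun x =>
    if x ∈ L then lam x
    else if hb : ∃ i, x ∈ B i then φseq hb.choose x
    else if hg : ∃ i, x ∈ Gp i then γseq hg.choose x
    else x with hH_def
  have H_L : ∀ {x}, x ∈ L → H x = lam x := by
    intro x hx
    rw [hH_def]
    simp only [if_pos hx]
  have H_B : ∀ {x i}, x ∈ B i → H x = φseq i x := by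
    intro x i hx
    have hnotL : x ∉ L := fun hc => lt_irrefl x (hLB i x hc x hx)
    have hex : ∃ j, x ∈ B j := ⟨i, hx⟩
    rw [hH_def]
    simp only [if_neg hnotL, dif_pos hex]
    rw [hBuniq hex.choose_spec hx]
  have H_Gp : ∀ {x i}, x ∈ Gp i → H x = γseq i x := by
    intro x i hx
    have hnotL : x ∉ L := fun hc => lt_irrefl x (hLGp i x hc x hx)
    have hnotB : ¬ ∃ j, x ∈ B j := by
      rintro ⟨j, hj⟩
      rcases Nat.lt_or_ge i j with h | h
      · exact lt_irrefl x (hGpB i j h x hx x hj)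
      · exact lt_irrefl x (hBGp j i h x hj x hx)
    have hex : ∃ j, x ∈ Gp j := ⟨i, hx⟩
    rw [hH_def]
    simp only [if_neg hnotL, dif_neg hnotB, dif_pos hex]
    rw [hGpuniq hex.choose_spec hx]
  have H_T : ∀ {x}, x ∈ T → H x = x := by
    intro x hx
    have hnotL : x ∉ L := fun hc => lt_irrefl x (hLT x hc x hx)
    have hnotB : ¬ ∃ j, x ∈ B j := by
      rintro ⟨j, hj⟩
      exact lt_irrefl x (hBT j x hj x hx)
    have hnotG : ¬ ∃ j, x ∈ Gp j := by
      rintro ⟨j, hj⟩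
      exact lt_irrefl x (hGpT j x hj x hx)
    rw [hH_def]
    simp only [if_neg hnotL, dif_neg hnotB, dif_neg hnotG]
  have hLsubL' : L ⊆ L' := fun z hz y hy => hLB 1 z hz y hy
  have hB0subL' : B 0 ⊆ L' := fun z hz y hy => Blt 0 1 (by omega) z hz y hy
  have hGp0subL' : Gp 0 ⊆ L' := fun z hz y hy => hz.2 y hy
  -- strict monotonicity of H
  have Hmono : StrictMono H := by
    intro x y hxy
    rcases hpart x with hx | ⟨i, hx⟩ | ⟨i, hx⟩ | hx <;>
      rcases hpart y with hy | ⟨j, hy⟩ | ⟨j, hy⟩ | hy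
    · rw [H_L hx, H_L hy]; exact hlammono x hx y hy hxy
    · rw [H_L hx, H_B hy]
      exact hL'B (j+1) (by omega) _ (HLmemlam x hx) _ (HBmemφ j y hy)
    · rw [H_L hx, H_Gp hy]
      exact hL'Gp (j+1) (by omega) _ (HLmemlam x hx) _ (HGpmemγ j y hy)
    · rw [H_L hx, H_T hy]
      exact hL'T _ (HLmemlam x hx) y hy
    · exact absurd hxy (not_lt.2 (hLB i y hy x hx).le)
    · by_cases hij : i = j
      · subst hij
        rw [H_B hx, H_B hy]
        exact hφmono i x hx y hy hxy
      · have hij' : i < j := by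
          rcases Nat.lt_or_ge i j with h | h
          · exact h
          · exact absurd hxy (not_lt.2 (Blt j i (by omega) y hy x hx).le)
        rw [H_B hx, H_B hy]
        exact Blt (i+1) (j+1) (by omega) _ (HBmemφ i x hx) _ (HBmemφ j y hy)
    · have hij : i ≤ j := by
        by_contra hc
        exact absurd hxy (not_lt.2 (hGpB j i (by omega) y hy x hx).le)
      rw [H_B hx, H_Gp hy]
      exact hBGp (i+1) (j+1) (by omega) _ (HBmemφ i x hx) _ (HGpmemγ j y hy)
    · rw [H_B hx, H_T hy]
      exact hBT (i+1) _ (HBmemφ i x hx) y hy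
    · exact absurd hxy (not_lt.2 (hLGp i y hy x hx).le)
    · have hij : i < j := by
        by_contra hc
        exact absurd hxy (not_lt.2 (hBGp j i (by omega) y hy x hx).le)
      rw [H_Gp hx, H_B hy]
      exact hGpB (i+1) (j+1) (by omega) _ (HGpmemγ i x hx) _ (HBmemφ j y hy)
    · by_cases hij : i = j
      · subst hij
        rw [H_Gp hx, H_Gp hy]
        exact hγmono i x hx y hy hxy
      · have hij' : i < j := by
          rcases Nat.lt_or_ge i j with h | h
          · exact h
          · exact absurd hxy (not_lt.2 (hGpGp j i (by omega) y hy x hx).le)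
        rw [H_Gp hx, H_Gp hy]
        exact hGpGp (i+1) (j+1) (by omega) _ (HGpmemγ i x hx) _ (HGpmemγ j y hy)
    · rw [H_Gp hx, H_T hy]
      exact hGpT (i+1) _ (HGpmemγ i x hx) y hy
    · exact absurd hxy (not_lt.2 (hLT y hy x hx).le)
    · exact absurd hxy (not_lt.2 (hBT j y hy x hx).le)
    · exact absurd hxy (not_lt.2 (hGpT j y hy x hx).le)
    · rw [H_T hx, H_T hy]; exact hxy
  -- surjectivity of H
  have Hsurj : Function.Surjective H := by
    intro z
    have hL'pre : z ∈ L' → ∃ x, H x = z := by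
      intro hz
      rw [← hlamim] at hz
      obtain ⟨x, hx, hxz⟩ := hz
      exact ⟨x, by rw [H_L hx]; exact hxz⟩
    rcases hpart z with hz | ⟨i, hz⟩ | ⟨i, hz⟩ | hz
    · exact hL'pre (hLsubL' hz)
    · cases i with
      | zero => exact hL'pre (hB0subL' hz)
      | succ j =>
          rw [← hφim j] at hz
          obtain ⟨x, hx, hxz⟩ := hz
          exact ⟨x, by rw [H_B hx]; exact hxz⟩
    · cases i with
      | zero => exact hL'pre (hGp0subL' hz)
      | succ j =>
          rw [← hγim j] at hz
          obtain ⟨x, hx, hxz⟩ := hz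
          exact ⟨x, by rw [H_Gp hx]; exact hxz⟩
    · exact ⟨z, H_T hz⟩
  -- the three restrictions
  set U : Set ℚ := ⋃ i, orbSet f (a i) with hU_def
  set U₂ : Set ℚ := ⋃ i, orbSet f (a (i+1)) with hU₂_def
  set U₁ : Set ℚ := ⋃ _i : ℕ, orbSet f (a 0) with hU₁_def
  have hUmem : ∀ {x}, x ∈ U ↔ ∃ i, x ∈ B i := fun {x} => Set.mem_iUnion
  have hU₂mem : ∀ {x}, x ∈ U₂ ↔ ∃ i, x ∈ B (i+1) := fun {x} => Set.mem_iUnion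
  have hU₁mem : ∀ {x}, x ∈ U₁ ↔ x ∈ B 0 := fun {x} =>
    ⟨fun h => by obtain ⟨i, hi⟩ := Set.mem_iUnion.1 h; exact hi, fun h => Set.mem_iUnion.2 ⟨0, h⟩⟩
  have hUmoved : ∀ x ∈ U, f x ≠ x := by
    intro x hx
    obtain ⟨i, hi⟩ := hUmem.1 hx
    exact hBmoved i x hi
  have hU₂moved : ∀ x ∈ U₂, f x ≠ x := by
    intro x hx
    obtain ⟨i, hi⟩ := hU₂mem.1 hx
    exact hBmoved (i+1) x hi
  have hU₁moved : ∀ x ∈ U₁, f x ≠ x := fun x hx => hBmoved 0 x (hU₁mem.1 hx)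
  set g : G := restr f U (sat_iUnion f a) with hg_def
  set g₂ : G := restr f U₂ (sat_iUnion f (fun i => a (i+1))) with hg₂_def
  set g₁ : G := restr f U₁ (sat_iUnion f (fun _ : ℕ => a 0)) with hg₁_def
  have hsuppg : support g = U := support_restr f U _ hUmoved
  have hsuppg₂ : support g₂ = U₂ := support_restr f U₂ _ hU₂moved
  have hsuppg₁ : support g₁ = U₁ := support_restr f U₁ _ hU₁moved
  -- non-membership facts
  have hLnotU : ∀ {x}, x ∈ L → x ∉ U := by
    intro x hx hc
    obtain ⟨i, hi⟩ := hUmem.1 hc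
    exact lt_irrefl x (hLB i x hx x hi)
  have hGpnotU : ∀ {x i}, x ∈ Gp i → x ∉ U := by
    intro x i hx hc
    obtain ⟨j, hj⟩ := hUmem.1 hc
    rcases Nat.lt_or_ge i j with h | h
    · exact lt_irrefl x (hGpB i j h x hx x hj)
    · exact lt_irrefl x (hBGp j i h x hj x hx)
  have hTnotU : ∀ {x}, x ∈ T → x ∉ U := by
    intro x hx hc
    obtain ⟨i, hi⟩ := hUmem.1 hc
    exact lt_irrefl x (hBT i x hi x hx)
  have hL'notU₂ : ∀ {x}, x ∈ L' → x ∉ U₂ := by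
    intro x hx hc
    obtain ⟨j, hj⟩ := hU₂mem.1 hc
    exact lt_irrefl x (hL'B (j+1) (by omega) x hx x hj)
  have hGpnotU₂ : ∀ {x i}, x ∈ Gp i → x ∉ U₂ := by
    intro x i hx hc
    obtain ⟨j, hj⟩ := hU₂mem.1 hc
    rcases Nat.lt_or_ge i (j+1) with h | h
    · exact lt_irrefl x (hGpB i (j+1) h x hx x hj)
    · exact lt_irrefl x (hBGp (j+1) i h x hj x hx)
  have hTnotU₂ : ∀ {x}, x ∈ T → x ∉ U₂ := by
    intro x hx hc
    obtain ⟨j, hj⟩ := hU₂mem.1 hc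
    exact lt_irrefl x (hBT (j+1) x hj x hx)
  have hB0notU₂ : ∀ {x}, x ∈ B 0 → x ∉ U₂ := by
    intro x hx hc
    obtain ⟨j, hj⟩ := hU₂mem.1 hc
    exact absurd (hBuniq hx hj) (by omega)
  have hBsnotU₁ : ∀ {x j}, x ∈ B (j+1) → x ∉ U₁ := by
    intro x j hx hc
    exact absurd (hBuniq (hU₁mem.1 hc) hx) (by omega)
  -- equivariance
  have heq : ∀ b, H (g b) = g₂ (H b) := by
    intro b
    rcases hpart b with hb | ⟨i, hb⟩ | ⟨i, hb⟩ | hb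
    · have h1 : g b = b := restr_apply_of_not_mem f U _ (hLnotU hb)
      have h2 : H b ∈ L' := by rw [H_L hb]; exact HLmemlam b hb
      have h3 : g₂ (H b) = H b := restr_apply_of_not_mem f U₂ _ (hL'notU₂ h2)
      rw [h1, h3]
    · have hbU : b ∈ U := hUmem.2 ⟨i, hb⟩
      have h1 : g b = f b := restr_apply_of_mem f U _ hbU
      have hfb : f b ∈ B i := apply_mem_orbSet' hb
      have h2 : H (f b) = f (φseq i b) := by rw [H_B hfb]; exact hφeq i b hb
      have h3 : H b = φseq i b := H_B hb
      have h4 : φseq i b ∈ B (i+1) := HBmemφ i b hb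
      have h5 : g₂ (φseq i b) = f (φseq i b) :=
        restr_apply_of_mem f U₂ _ (hU₂mem.2 ⟨i, h4⟩)
      rw [h1, h2, h3, h5]
    · have h1 : g b = b := restr_apply_of_not_mem f U _ (hGpnotU hb)
      have h2 : H b ∈ Gp (i+1) := by rw [H_Gp hb]; exact HGpmemγ i b hb
      have h3 : g₂ (H b) = H b := restr_apply_of_not_mem f U₂ _ (hGpnotU₂ h2)
      rw [h1, h3]
    · have h1 : g b = b := restr_apply_of_not_mem f U _ (hTnotU hb)
      have h2 : H b = b := H_T hb
      have h3 : g₂ b = b := restr_apply_of_not_mem f U₂ _ (hTnotU₂ hb)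
      rw [h1, h2, h3]
  -- assemble everything
  refine ⟨g, g₁, g₂, ⟨?_, ?_⟩, ?_, ⟨?_, ?_⟩, ⟨?_, ?_⟩, ?_, ?_, ?_, ?_⟩
  · rw [hsuppg]
    intro x hx
    exact hUmoved x hx
  · intro x hx
    rw [hsuppg] at hx
    exact restr_apply_of_mem f U _ hx
  · intro hc
    have h1 : g (a 0) = f (a 0) := restr_apply_of_mem f U _ (hUmem.2 ⟨0, hBne 0⟩)
    rw [hc, one_apply] at h1
    exact ha_mv 0 h1.symm
  · intro hc
    have h1 : g₁ (a 0) = f (a 0) := restr_apply_of_mem f U₁ _ (hU₁mem.2 (hBne 0))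
    rw [hc, one_apply] at h1
    exact ha_mv 0 h1.symm
  · refine ⟨B 0, ?_, ?_⟩
    · exact (nontrivialOrbital_restr_iff (fun _ : ℕ => a 0) (fun _ => ha_mv 0) (B 0)).2 ⟨0, rfl⟩
    · intro X hX
      obtain ⟨i, hXi⟩ := (nontrivialOrbital_restr_iff (fun _ : ℕ => a 0)
        (fun _ => ha_mv 0) X).1 hX
      exact hXi
  · rw [hsuppg₁, hsuppg]
    intro x hx
    exact hUmem.2 ⟨0, hU₁mem.1 hx⟩
  · intro x hx
    rw [hsuppg₁] at hx
    rw [restr_apply_of_mem f U₁ _ hx, restr_apply_of_mem f U _ (hUmem.2 ⟨0, hU₁mem.1 hx⟩)]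
  · refine ⟨B 0, ?_, ?_⟩
    · exact (nontrivialOrbital_restr_iff a ha_mv (B 0)).2 ⟨0, rfl⟩
    · rw [hsuppg₁]
      exact Set.ext fun x => hU₁mem
  · rw [hsuppg₁, hsuppg₂]
    rw [Set.eq_empty_iff_forall_notMem]
    rintro x ⟨hx1, hx2⟩
    exact hB0notU₂ (hU₁mem.1 hx1) hx2
  · intro b
    rcases hpart b with hb | ⟨i, hb⟩ | ⟨i, hb⟩ | hb
    · have h1 : g b = b := restr_apply_of_not_mem f U _ (hLnotU hb)
      have h2 : g₂ b = b := restr_apply_of_not_mem f U₂ _ (hL'notU₂ (hLsubL' hb))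
      have h3 : g₁ b = b := by
        refine restr_apply_of_not_mem f U₁ _ ?_
        intro hc
        exact lt_irrefl b (hLB 0 b hb b (hU₁mem.1 hc))
      rw [h1, h2, h3]
    · cases i with
      | zero =>
          have h1 : g b = f b := restr_apply_of_mem f U _ (hUmem.2 ⟨0, hb⟩)
          have h2 : g₂ b = b := restr_apply_of_not_mem f U₂ _ (hB0notU₂ hb)
          have h3 : g₁ b = f b := restr_apply_of_mem f U₁ _ (hU₁mem.2 hb)
          rw [h1, h2, h3]
      | succ j =>
          have h1 : g b = f b := restr_apply_of_mem f U _ (hUmem.2 ⟨j+1, hb⟩)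
          have h2 : g₂ b = f b := restr_apply_of_mem f U₂ _ (hU₂mem.2 ⟨j, hb⟩)
          have hfb : f b ∈ B (j+1) := apply_mem_orbSet' hb
          have h3 : g₁ (f b) = f b := restr_apply_of_not_mem f U₁ _ (hBsnotU₁ hfb)
          rw [h1, h2, h3]
    · have h1 : g b = b := restr_apply_of_not_mem f U _ (hGpnotU hb)
      have h2 : g₂ b = b := restr_apply_of_not_mem f U₂ _ (hGpnotU₂ hb)
      have h3 : g₁ b = b := by
        refine restr_apply_of_not_mem f U₁ _ ?_
        intro hc
        exact lt_irrefl b (hBGp 0 i (by omega) b (hU₁mem.1 hc) b hb)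
      rw [h1, h2, h3]
    · have h1 : g b = b := restr_apply_of_not_mem f U _ (hTnotU hb)
      have h2 : g₂ b = b := restr_apply_of_not_mem f U₂ _ (hTnotU₂ hb)
      have h3 : g₁ b = b := by
        refine restr_apply_of_not_mem f U₁ _ ?_
        intro hc
        exact lt_irrefl b (hBT 0 b (hU₁mem.1 hc) b hb)
      rw [h1, h2, h3]
  · refine ⟨StrictMono.orderIsoOfSurjective H Hmono Hsurj, fun z => ?_⟩
    set hIso := StrictMono.orderIsoOfSurjective H Hmono Hsurj with hIso_def
    have hcoe : ∀ x, hIso x = H x := fun x =>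
      congrFun (StrictMono.coe_orderIsoOfSurjective H Hmono Hsurj) x
    have h1 := heq (hIso.symm z)
    have h2 : H (hIso.symm z) = z := by rw [← hcoe, OrderIso.apply_symm_apply]
    rw [h2] at h1
    rw [hcoe]
    exact h1.symm

end L21

namespace L21

open scoped Classical

lemma nontriv_anchor {f : G} {X : Set ℚ} (h : IsNontrivialOrbital f X) :
    ∃ a, f a ≠ a ∧ X = orbSet f a := by
  obtain ⟨⟨a₀, hX⟩, y, hyX, hy⟩ := h
  have hX' : X = orbSet f a₀ := hX
  refine ⟨y, hy, ?_⟩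
  rw [hX']
  exact (orbSet_eq_of_mem (hX' ▸ hyX)).symm

/-- Transport of the conclusion along `rho`. -/
lemma main_transport (f : G)
    (H : ∃ g g₁ g₂ : G,
      IsRestriction g (rho f) ∧ g ≠ 1 ∧
      IsBump g₁ ∧ IsRestriction g₁ g ∧
      (∃ X : Set ℚ, IsNontrivialOrbital g X ∧ support g₁ = X) ∧
      support g₁ ∩ support g₂ = ∅ ∧
      (∀ a : ℚ, g a = g₁ (g₂ a)) ∧
      (∃ h : G, ∀ a : ℚ, g₂ a = h (g (h.symm a)))) :
    ∃ g g₁ g₂ : G,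
      IsRestriction g f ∧ g ≠ 1 ∧
      IsBump g₁ ∧ IsRestriction g₁ g ∧
      (∃ X : Set ℚ, IsNontrivialOrbital g X ∧ support g₁ = X) ∧
      support g₁ ∩ support g₂ = ∅ ∧
      (∀ a : ℚ, g a = g₁ (g₂ a)) ∧
      (∃ h : G, ∀ a : ℚ, g₂ a = h (g (h.symm a))) := by
  obtain ⟨g, g₁, g₂, ⟨hr1, hr2⟩, hne, ⟨hb1, hb2⟩, ⟨hr1', hr2'⟩, ⟨X, hX1, hX2⟩, hdisj, hprod,
    ⟨h, hconj⟩⟩ := H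
  have hrestr : ∀ (u v : G), (support u ⊆ support v ∧ ∀ a ∈ support u, u a = v a) →
      support (rho u) ⊆ support (rho v) ∧ ∀ a ∈ support (rho u), rho u a = rho v a := by
    intro u v ⟨h1, h2⟩
    constructor
    · intro x hx
      exact (support_rho v x).2 (h1 ((support_rho u x).1 hx))
    · intro x hx
      rw [rho_apply, rho_apply, h2 (-x) ((support_rho u x).1 hx)]
  have hne' : ∀ u : G, u ≠ 1 → rho u ≠ 1 := by
    intro u hu hc
    apply hu
    rw [← rho_rho u, hc, rho_one]
  refine ⟨rho g, rho g₁, rho g₂, ?_, hne' g hne, ?_, ?_, ?_, ?_, ?_, ?_⟩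
  · have := hrestr g (rho f) ⟨hr1, hr2⟩
    rwa [rho_rho] at this
  · refine ⟨hne' g₁ hb1, ?_⟩
    obtain ⟨X₀, hX₀1, hX₀2⟩ := hb2
    refine ⟨Neg.neg ⁻¹' X₀, ?_, ?_⟩
    · show IsNontrivialOrbital (rho g₁) (Neg.neg ⁻¹' X₀)
      rw [isNontrivialOrbital_rho]
      have : Neg.neg ⁻¹' (Neg.neg ⁻¹' X₀) = X₀ := by
        ext z; simp
      rwa [this]
    · intro Y hY
      replace hY : IsNontrivialOrbital (rho g₁) Y := hY
      rw [isNontrivialOrbital_rho] at hY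
      have := hX₀2 _ hY
      rw [← this]
      ext z; simp
  · exact hrestr g₁ g ⟨hr1', hr2'⟩
  · refine ⟨Neg.neg ⁻¹' X, ?_, ?_⟩
    · rw [isNontrivialOrbital_rho]
      have : Neg.neg ⁻¹' (Neg.neg ⁻¹' X) = X := by ext z; simp
      rwa [this]
    · ext z
      rw [Set.mem_preimage, ← hX2]
      exact support_rho g₁ z
  · rw [Set.eq_empty_iff_forall_notMem]
    rintro x ⟨hx1, hx2⟩
    have h1 := (support_rho g₁ x).1 hx1
    have h2 := (support_rho g₂ x).1 hx2
    have : -x ∈ support g₁ ∩ support g₂ := ⟨h1, h2⟩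
    rw [hdisj] at this
    exact this
  · intro x
    rw [rho_apply, rho_apply, rho_apply, neg_neg, hprod (-x)]
  · refine ⟨rho h, fun z => ?_⟩
    rw [rho_apply, hconj (-z)]
    have hsymm : (rho h).symm z = -(h.symm (-z)) := rho_symm_apply h z
    rw [hsymm, rho_apply, rho_apply, neg_neg, neg_neg]

end L21


/-- Lemma 2.1: if `f ∈ G` has infinitely many nontrivial orbitals, then it has a
non-identity restriction `g` which may be written as `g = g₁ ∘ g₂` where `g₁` is an
orbital of `g` (a bump whose support is a single nontrivial orbital of `g`, restricting `g`),
`g₁, g₂` have disjoint supports, and `g₂` is conjugate to `g` in `G`. -/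
theorem infinitely_many_orbitals_split
    (f : G) (hf : {X : Set ℚ | IsNontrivialOrbital f X}.Infinite) :
    ∃ g g₁ g₂ : G,
      IsRestriction g f ∧ g ≠ 1 ∧
      IsBump g₁ ∧ IsRestriction g₁ g ∧
      (∃ X : Set ℚ, IsNontrivialOrbital g X ∧ support g₁ = X) ∧
      support g₁ ∩ support g₂ = ∅ ∧
      (∀ a : ℚ, g a = g₁ (g₂ a)) ∧
      (∃ h : G, ∀ a : ℚ, g₂ a = h (g (h.symm a))) := by

  classical
  open L21 in
  -- anchors for infinitely many distinct orbitals
  set E : ℕ ↪ ↥{X : Set ℚ | IsNontrivialOrbital f X} := Set.Infinite.natEmbedding _ hf with hE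
  have hX : ∀ n : ℕ, IsNontrivialOrbital f ((E n : Set ℚ)) := fun n => (E n).2
  have hXinj : Function.Injective (fun n => (E n : Set ℚ)) := by
    intro n m hnm
    exact E.injective (Subtype.ext hnm)
  choose w hw1 hw2 using fun n => nontriv_anchor (hX n)
  have hwsep : ∀ n m, n ≠ m → ¬ orbRel f (w n) (w m) := by
    intro n m hnm hc
    apply hnm
    apply hXinj
    show (E n : Set ℚ) = (E m : Set ℚ)
    rw [hw2 n, hw2 m]
    exact orbSet_eq_of_orbRel hc
  have hwinj : Function.Injective w := by
    intro n m hnm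
    by_contra hc
    exact hwsep n m hc (hnm ▸ orbRel_refl f (w n))
  obtain ⟨emb, hc | hc⟩ := exists_increasing_or_nonincreasing_subseq ((· < ·) : ℚ → ℚ → Prop) w
  · -- increasing case
    refine main_aux f (fun i => w (emb i)) (fun i => hw1 _) ?_ ?_
    · intro i j hij
      exact hc i j hij
    · intro i j hij
      exact hwsep _ _ (fun hcc => hij (emb.injective hcc))
  · -- nonincreasing case: strictly decreasing since injective
    have hanti : ∀ i j, i < j → w (emb j) < w (emb i) := by
      intro i j hij
      rcases lt_trichotomy (w (emb i)) (w (emb j)) with h | h | h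
      · exact absurd h (hc i j hij)
      · exfalso
        have h1 := hwinj h
        have h2 := emb.injective h1
        omega
      · exact h
    apply main_transport
    refine main_aux (rho f) (fun i => -(w (emb i))) ?_ ?_ ?_
    · intro i
      rw [rho_apply, neg_neg]
      intro hcc
      apply hw1 (emb i)
      have h2 : -f (w (emb i)) = -w (emb i) := hcc
      linarith
    · intro i j hij
      simp only [neg_lt_neg_iff]
      exact hanti i j hij
    · intro i j hij hcc
      rw [orbRel_rho] at hcc
      exact hwsep _ _ (fun h' => hij (emb.injective h')) hcc
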